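/- Let X ⊆ ℝ^n be convex closed, f convex on X, d differentiable and 1-strongly convex with Bregman divergence V[x](z) = d(z) − d(x) − ⟨∇d(x), z − x⟩, h > 0, δ ≥ 0, x ∈ X, and let g be a δ-subgradient of f at x. If x⁺ = argmin_{z ∈ X} { ⟨h·g, z⟩ + V[x](z) }, then for any z ∈ X: h·(f(x) − f(z)) ≤ h·⟨g, x − z⟩ + h·δ ≤ (h²/2)·‖g‖₂² + h·δ + V[x](z) − V[x⁺](z). -/

import Mathlib

open scoped RealInnerProductSpace

open Filter Set Topology in
lemma aux_deriv_nonneg_of_min {ψ : ℝ → ℝ} {c : ℝ} (hd : HasDerivAt ψ c 0)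
    (hmin : ∀ t ∈ Set.Ioo (0:ℝ) 1, ψ 0 ≤ ψ t) : 0 ≤ c := by
  have hs := hasDerivAt_iff_tendsto_slope.1 hd
  have hs' : Tendsto (slope ψ 0) (𝓝[>] 0) (𝓝 c) :=
    hs.mono_left (nhdsWithin_mono _ (fun t ht => ne_of_gt ht))
  refine ge_of_tendsto hs' ?_
  filter_upwards [Ioo_mem_nhdsGT_of_mem ⟨le_refl (0:ℝ), one_pos⟩] with t ht
  have : slope ψ 0 t = (ψ t - ψ 0) / (t - 0) := slope_def_field ψ 0 t
  rw [this]
  exact div_nonneg (sub_nonneg.2 (hmin t ht)) (by linarith [ht.1])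

/-- Mirror Descent step property for a `δ`-subgradient: for any `z ∈ X`,
`h (f(x) - f(z)) ≤ h ⟪g, x - z⟫ + h δ ≤ (h²/2)‖g‖² + h δ + V[x](z) - V[x⁺](z)`. -/
theorem mirror_descent_step_property_delta_subgradient {n : ℕ}
    (X : Set (EuclideanSpace ℝ (Fin n))) (hXconv : Convex ℝ X) (hXcl : IsClosed X)
    (f : EuclideanSpace ℝ (Fin n) → ℝ) (hfconv : ConvexOn ℝ X f)
    (d : EuclideanSpace ℝ (Fin n) → ℝ)
    (gd : EuclideanSpace ℝ (Fin n) → EuclideanSpace ℝ (Fin n))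
    (hgd : ∀ w, HasGradientAt d (gd w) w)
    (hdsc : ∀ w v, d w + ⟪gd w, v - w⟫ + 1 / 2 * ‖v - w‖ ^ 2 ≤ d v)
    (V : EuclideanSpace ℝ (Fin n) → EuclideanSpace ℝ (Fin n) → ℝ)
    (hV : ∀ w v, V w v = d v - d w - ⟪gd w, v - w⟫)
    (h : ℝ) (hh : 0 < h) (δ : ℝ) (hδ : 0 ≤ δ)
    (x : EuclideanSpace ℝ (Fin n)) (hx : x ∈ X)
    (gx : EuclideanSpace ℝ (Fin n))
    (hgx : ∀ z ∈ X, f x + ⟪gx, z - x⟫ - δ ≤ f z)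
    (xp : EuclideanSpace ℝ (Fin n)) (hxpX : xp ∈ X)
    (hxpmin : IsMinOn (fun z => ⟪h • gx, z⟫ + V x z) X xp) :
    ∀ z ∈ X, h * (f x - f z) ≤ h * ⟪gx, x - z⟫ + h * δ ∧
      h * ⟪gx, x - z⟫ + h * δ ≤ h ^ 2 / 2 * ‖gx‖ ^ 2 + h * δ + V x z - V xp z := by
  intro z hz
  constructor
  · -- first inequality: δ-subgradient property
    have h1 := hgx z hz
    have e1 : ⟪gx, x - z⟫ = -⟪gx, z - x⟫ := by
      rw [← inner_neg_right, neg_sub]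
    have h2 : f x - f z ≤ ⟪gx, x - z⟫ + δ := by rw [e1]; linarith
    nlinarith [mul_le_mul_of_nonneg_left h2 hh.le]
  · -- second inequality
    set v : EuclideanSpace ℝ (Fin n) := z - xp with hv
    -- the curve t ↦ xp + t • v
    have hline : HasDerivAt (fun t : ℝ => xp + t • v) v 0 := by
      simpa using ((hasDerivAt_id (0:ℝ)).smul_const v).const_add xp
    -- derivative of d along the curve
    have hdcomp : HasDerivAt (fun t : ℝ => d (xp + t • v)) ⟪gd xp, v⟫ 0 := by
      have hfd' : HasFDerivAt d
          ((InnerProductSpace.toDual ℝ (EuclideanSpace ℝ (Fin n))) (gd xp))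
          ((fun t : ℝ => xp + t • v) 0) := by simpa using (hgd xp).hasFDerivAt
      have := hfd'.comp_hasDerivAt (0:ℝ) hline
      simp [InnerProductSpace.toDual_apply_apply] at this
      exact this
    -- derivatives of the linear parts
    have hlin1 : HasDerivAt (fun t : ℝ => ⟪h • gx, xp + t • v⟫) ⟪h • gx, v⟫ 0 := by
      have : (fun t : ℝ => ⟪h • gx, xp + t • v⟫)
          = fun t : ℝ => ⟪h • gx, xp⟫ + t * ⟪h • gx, v⟫ := by
        funext t; simp only [inner_add_right, real_inner_smul_right]
      rw [this]
      simpa using ((hasDerivAt_id (0:ℝ)).mul_const ⟪h • gx, v⟫).const_add ⟪h • gx, xp⟫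
    have hlin2 : HasDerivAt (fun t : ℝ => ⟪gd x, xp + t • v - x⟫) ⟪gd x, v⟫ 0 := by
      have : (fun t : ℝ => ⟪gd x, xp + t • v - x⟫)
          = fun t : ℝ => ⟪gd x, xp - x⟫ + t * ⟪gd x, v⟫ := by
        funext t
        simp only [inner_sub_right, inner_add_right, real_inner_smul_right]
        ring
      rw [this]
      simpa using ((hasDerivAt_id (0:ℝ)).mul_const ⟪gd x, v⟫).const_add ⟪gd x, xp - x⟫
    -- ψ : objective along the curve
    have hψ : HasDerivAt
        (fun t : ℝ => ⟪h • gx, xp + t • v⟫ + (d (xp + t • v) - d x - ⟪gd x, xp + t • v - x⟫))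
        (⟪h • gx, v⟫ + (⟪gd xp, v⟫ - ⟪gd x, v⟫)) 0 :=
      hlin1.add ((hdcomp.sub_const (d x)).sub hlin2)
    have hmem : ∀ t ∈ Set.Ioo (0:ℝ) 1, xp + t • v ∈ X := by
      intro t ht
      have : xp + t • v = (1 - t) • xp + t • z := by rw [hv]; module
      rw [this]
      exact hXconv hxpX hz (by linarith [ht.2]) ht.1.le (by ring)
    have hmin : ∀ t ∈ Set.Ioo (0:ℝ) 1,
        (fun t : ℝ => ⟪h • gx, xp + t • v⟫ + (d (xp + t • v) - d x - ⟪gd x, xp + t • v - x⟫)) 0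
        ≤ (fun t : ℝ => ⟪h • gx, xp + t • v⟫ + (d (xp + t • v) - d x - ⟪gd x, xp + t • v - x⟫)) t := by
      intro t ht
      have h1 := hxpmin (hmem t ht)
      simp only [hV] at h1 ⊢
      simpa using h1
    have hc := aux_deriv_nonneg_of_min hψ hmin
    have hopt : 0 ≤ h * ⟪gx, z - xp⟫ + ⟪gd xp, z - xp⟫ - ⟪gd x, z - xp⟫ := by
      have : ⟪h • gx, v⟫ = h * ⟪gx, v⟫ := real_inner_smul_left gx v h
      rw [this] at hc; rw [hv] at hc; linarith
    -- strong convexity at (x, xp)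
    have hVxxp : d x + ⟪gd x, xp - x⟫ + 1 / 2 * ‖x - xp‖ ^ 2 ≤ d xp := by
      have := hdsc x xp
      rwa [norm_sub_rev xp x] at this
    -- Young's inequality
    have hyoung : h * ⟪gx, x - xp⟫ ≤ h ^ 2 / 2 * ‖gx‖ ^ 2 + 1 / 2 * ‖x - xp‖ ^ 2 := by
      nlinarith [mul_le_mul_of_nonneg_left (real_inner_le_norm gx (x - xp)) hh.le,
        sq_nonneg (h * ‖gx‖ - ‖x - xp‖)]
    -- inner product decompositions
    have e1 : h * ⟪gx, x - z⟫ = h * ⟪gx, x - xp⟫ - h * ⟪gx, z - xp⟫ := by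
      simp only [inner_sub_right]; ring
    have e2 : ⟪gd x, z - x⟫ = ⟪gd x, z - xp⟫ + ⟪gd x, xp - x⟫ := by
      simp only [inner_sub_right]; ring
    rw [hV, hV]
    linarith [hopt, hVxxp, hyoung, e1, e2]
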